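/- For every nonnegative integer a and real γ > 0, ∫_0^{2π}∫_0^{2π} |e^{iφ_1} − e^{iφ_2}|^2 exp(γ(e^{iφ_1}+e^{iφ_2})) e^{−ia(φ_1+φ_2)} dφ_1 dφ_2 / (2π)^2 = γ^{2a} · 2 / (a!·(a+1)!). -/

import Mathlib

open Complex MeasureTheory intervalIntegral

lemma int_exp_int (j : ℤ) :
    ∫ φ in (0:ℝ)..(2*Real.pi), Complex.exp ((j:ℂ) * Complex.I * φ) =
      if j = 0 then ((2*Real.pi : ℝ) : ℂ) else 0 := by
  rcases eq_or_ne j 0 with h | h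
  · simp [h]
  · rw [if_neg h]
    have hc : (j:ℂ) * Complex.I ≠ 0 := by
      simp [Complex.ext_iff, h, Complex.I_ne_zero]
    rw [integral_exp_mul_complex hc]
    have : (j:ℂ) * Complex.I * ((2*Real.pi : ℝ):ℂ) = j * (2 * Real.pi * Complex.I) := by push_cast; ring
    rw [this, Complex.exp_int_mul_two_pi_mul_I]
    simp

lemma J_eq (γ : ℝ) (hγ : 0 < γ) (m : ℤ) :
    ∫ φ in (0:ℝ)..(2*Real.pi),
        Complex.exp (γ * Complex.exp (Complex.I * φ)) * Complex.exp ((m:ℂ) * Complex.I * φ) =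
      if 0 ≤ -m then ((2*Real.pi*γ^(-m).toNat/(Nat.factorial (-m).toNat) : ℝ):ℂ) else 0 := by
  have h2π : (0:ℝ) ≤ 2*Real.pi := by positivity
  set F : ℕ → ℝ → ℂ := fun k φ => ((γ:ℂ)^k / (Nat.factorial k)) * Complex.exp ((((k:ℤ)+m : ℤ):ℂ) * Complex.I * φ) with hF
  have hpt : ∀ φ : ℝ, Complex.exp (γ * Complex.exp (Complex.I * φ)) * Complex.exp ((m:ℂ) * Complex.I * φ)
      = ∑' k, F k φ := by
    intro φ
    have hexp : Complex.exp ((γ:ℂ) * Complex.exp (Complex.I * φ))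
        = ∑' k : ℕ, ((γ:ℂ) * Complex.exp (Complex.I * φ))^k / (Nat.factorial k) := by
      rw [Complex.exp_eq_exp_ℂ, NormedSpace.exp_eq_tsum_div]
    rw [hexp]
    rw [← tsum_mul_right]
    congr 1; funext k
    rw [hF]
    simp only [mul_pow, ← Complex.exp_nat_mul]
    push_cast
    rw [add_mul, add_mul, Complex.exp_add, mul_assoc (k:ℂ) Complex.I]
    ring
  have hFint : ∀ k, ∫ φ in (0:ℝ)..(2*Real.pi), F k φ
      = ((γ:ℂ)^k / (Nat.factorial k)) * (if ((k:ℤ)+m) = 0 then ((2*Real.pi : ℝ):ℂ) else 0) := by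
    intro k
    rw [hF, intervalIntegral.integral_const_mul, int_exp_int]
  have hnorm : ∀ k φ, ‖F k φ‖ = γ^k / (Nat.factorial k) := by
    intro k φ
    rw [hF]
    simp only [norm_mul, Complex.norm_exp]
    have : (((((k:ℤ)+m : ℤ):ℂ)) * Complex.I * φ).re = 0 := by simp
    rw [this, Real.exp_zero, mul_one]
    rw [norm_div, Complex.norm_natCast, norm_pow, Complex.norm_of_nonneg hγ.le]
  have hsum : Summable (fun k => γ^k / ((Nat.factorial k) : ℝ)) := Real.summable_pow_div_factorial γ
  have key : ∫ φ in (0:ℝ)..(2*Real.pi),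
      Complex.exp (γ * Complex.exp (Complex.I * φ)) * Complex.exp ((m:ℂ) * Complex.I * φ)
      = ∑' k, ∫ φ in (0:ℝ)..(2*Real.pi), F k φ := by
    rw [intervalIntegral.integral_congr (g := fun φ => ∑' k, F k φ) (fun φ _ => hpt φ)]
    rw [intervalIntegral.integral_of_le h2π]
    have := MeasureTheory.integral_tsum_of_summable_integral_norm (μ := volume.restrict (Set.Ioc (0:ℝ) (2*Real.pi))) (F := F)
      (fun k => by
        apply Continuous.integrableOn_Ioc
        exact continuous_const.mul (Complex.continuous_exp.comp (by continuity)))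
      (by
        apply Summable.of_nonneg_of_le (fun k => integral_nonneg (fun φ => norm_nonneg _))
          (fun k => ?_) (hsum.mul_left (2*Real.pi))
        have : ∫ φ in Set.Ioc (0:ℝ) (2*Real.pi), ‖F k φ‖ = (2*Real.pi) * (γ^k / (Nat.factorial k)) := by
          simp_rw [hnorm k]
          rw [MeasureTheory.setIntegral_const, measureReal_def, Real.volume_Ioc, smul_eq_mul]
          rw [ENNReal.toReal_ofReal (by linarith)]
          ring_nf
        rw [this])
    rw [← this]
    congr 1; funext k
    rw [intervalIntegral.integral_of_le h2π]
  rw [key]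
  simp_rw [hFint]
  rcases le_or_gt m 0 with hm | hm
  · rw [if_pos (by omega)]
    rw [tsum_eq_single (-m).toNat]
    · rw [if_pos (by omega)]
      push_cast
      ring
    · intro k hk
      rw [if_neg (by omega), mul_zero]
  · rw [if_neg (by omega)]
    convert tsum_zero with k
    rw [if_neg (by omega), mul_zero]

theorem selberg_arith (b : ℕ) (x p f : ℂ) (hf : f ≠ 0) (hp : p ≠ 0)
    (hb1 : (b:ℂ)+1 ≠ 0) (hb2 : (b:ℂ)+1+1 ≠ 0) :
    (2 * (2*p*x^(b+1)/(((b:ℂ)+1)*f)) * (2*p*x^(b+1)/(((b:ℂ)+1)*f))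
      - (2*p*x^b/f) * (2*p*x^(b+2)/((((b:ℂ)+1)+1)*((((b:ℂ)+1))*f)))
      - (2*p*x^(b+2)/((((b:ℂ)+1)+1)*((((b:ℂ)+1))*f))) * (2*p*x^b/f)) / (2*p)^2
    = x^(2*(b+1)) * 2 / (((((b:ℂ)+1))*f) * ((((b:ℂ)+1)+1)*((((b:ℂ)+1))*f))) := by
  set c : ℂ := (b:ℂ)
  have hD1 : (c+1)*f ≠ 0 := mul_ne_zero hb1 hf
  have hD2 : ((c+1)+1)*((c+1)*f) ≠ 0 := mul_ne_zero hb2 hD1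
  have e1 : 2 * (2*p*x^(b+1)/((c+1)*f)) * (2*p*x^(b+1)/((c+1)*f))
      = 2*((2*p*x^(b+1))*(2*p*x^(b+1))) / (((c+1)*f)*((c+1)*f)) := by
    rw [mul_assoc, div_mul_div_comm, mul_div_assoc']
  have e2 : (2*p*x^b/f) * (2*p*x^(b+2)/(((c+1)+1)*((c+1)*f)))
      = ((2*p*x^b)*(2*p*x^(b+2))) / (f*(((c+1)+1)*((c+1)*f))) := by
    rw [div_mul_div_comm]
  have e3 : (2*p*x^(b+2)/(((c+1)+1)*((c+1)*f))) * (2*p*x^b/f)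
      = ((2*p*x^(b+2))*(2*p*x^b)) / ((((c+1)+1)*((c+1)*f))*f) := by
    rw [div_mul_div_comm]
  rw [e1, e2, e3, div_sub_div _ _ (mul_ne_zero hD1 hD1) (mul_ne_zero hf hD2),
    div_sub_div _ _ (mul_ne_zero (mul_ne_zero hD1 hD1) (mul_ne_zero hf hD2)) (mul_ne_zero hD2 hf),
    div_div, div_eq_div_iff (by
      exact mul_ne_zero (mul_ne_zero (mul_ne_zero (mul_ne_zero hD1 hD1) (mul_ne_zero hf hD2)) (mul_ne_zero hD2 hf))
        (pow_ne_zero _ (mul_ne_zero two_ne_zero hp))) (mul_ne_zero hD1 hD2)]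
  ring

theorem circular_selberg_d2 (a : ℕ) (γ : ℝ) (hγ : 0 < γ) :
    (∫ φ1 in (0:ℝ)..(2 * Real.pi), ∫ φ2 in (0:ℝ)..(2 * Real.pi),
        ((‖Complex.exp (Complex.I * φ1) - Complex.exp (Complex.I * φ2)‖ ^ 2 : ℝ) : ℂ) *
          Complex.exp ((γ : ℂ) * (Complex.exp (Complex.I * φ1) + Complex.exp (Complex.I * φ2))) *
          Complex.exp (-Complex.I * (a : ℂ) * ((φ1 : ℂ) + (φ2 : ℂ)))) / ((2 * Real.pi : ℝ) : ℂ) ^ 2 =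
      (γ : ℂ) ^ (2 * a) * 2 / ((a.factorial : ℂ) * ((a + 1).factorial : ℂ)) := by
  set E : ℤ → ℝ → ℂ := fun n φ =>
    Complex.exp ((γ:ℂ) * Complex.exp (Complex.I * φ)) * Complex.exp ((n:ℂ) * Complex.I * φ) with hE
  have hcont : ∀ n : ℤ, Continuous (E n) := by
    intro n
    apply Continuous.mul
    · exact Complex.continuous_exp.comp (continuous_const.mul
        (Complex.continuous_exp.comp (continuous_const.mul Complex.continuous_ofReal)))
    · exact Complex.continuous_exp.comp
        ((continuous_const.mul continuous_const).mul Complex.continuous_ofReal)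
  have hIE : ∀ n : ℤ, IntervalIntegrable (E n) MeasureTheory.volume 0 (2*Real.pi) :=
    fun n => (hcont n).intervalIntegrable _ _
  -- pointwise identity
  have hpt : ∀ φ1 φ2 : ℝ,
      ((‖Complex.exp (Complex.I * φ1) - Complex.exp (Complex.I * φ2)‖ ^ 2 : ℝ) : ℂ) *
          Complex.exp ((γ : ℂ) * (Complex.exp (Complex.I * φ1) + Complex.exp (Complex.I * φ2))) *
          Complex.exp (-Complex.I * (a : ℂ) * ((φ1 : ℂ) + (φ2 : ℂ)))
      = 2 * E (-a) φ1 * E (-a) φ2 - E (1-a) φ1 * E (-1-a) φ2 - E (-1-a) φ1 * E (1-a) φ2 := by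
    intro φ1 φ2
    have habs : ((‖Complex.exp (Complex.I * φ1) - Complex.exp (Complex.I * φ2)‖ ^ 2 : ℝ) : ℂ)
        = (Complex.exp (Complex.I * φ1) - Complex.exp (Complex.I * φ2)) *
          (Complex.exp (-(Complex.I * φ1)) - Complex.exp (-(Complex.I * φ2))) := by
      rw [Complex.sq_norm, ← Complex.mul_conj]
      congr 1
      rw [map_sub, ← Complex.exp_conj, ← Complex.exp_conj, map_mul, map_mul,
        Complex.conj_I, Complex.conj_ofReal, Complex.conj_ofReal]
      ring_nf
    rw [habs]
    have hx1 : Complex.exp (Complex.I * φ1) * Complex.exp (-(Complex.I * φ1)) = 1 := by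
      rw [← Complex.exp_add]; simp
    have hx2 : Complex.exp (Complex.I * φ2) * Complex.exp (-(Complex.I * φ2)) = 1 := by
      rw [← Complex.exp_add]; simp
    have hsplit : ∀ (n : ℤ) (φ : ℝ), E n φ =
        Complex.exp ((γ:ℂ) * Complex.exp (Complex.I * φ)) * Complex.exp ((n:ℂ) * Complex.I * φ) :=
      fun n φ => rfl
    simp only [hsplit]
    have eg : Complex.exp ((γ : ℂ) * (Complex.exp (Complex.I * φ1) + Complex.exp (Complex.I * φ2)))
        = Complex.exp ((γ:ℂ) * Complex.exp (Complex.I * φ1)) *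
          Complex.exp ((γ:ℂ) * Complex.exp (Complex.I * φ2)) := by
      rw [← Complex.exp_add]; ring_nf
    have et : Complex.exp (-Complex.I * (a : ℂ) * ((φ1 : ℂ) + (φ2 : ℂ)))
        = Complex.exp (((-a:ℤ):ℂ) * Complex.I * φ1) * Complex.exp (((-a:ℤ):ℂ) * Complex.I * φ2) := by
      rw [← Complex.exp_add]; push_cast; ring_nf
    have e1 : ∀ φ : ℝ, Complex.exp (((1-(a:ℤ) : ℤ):ℂ) * Complex.I * φ)
        = Complex.exp (Complex.I * φ) * Complex.exp (((-a:ℤ):ℂ) * Complex.I * φ) := by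
      intro φ; rw [← Complex.exp_add]; push_cast; ring_nf
    have e2 : ∀ φ : ℝ, Complex.exp (((-1-(a:ℤ) : ℤ):ℂ) * Complex.I * φ)
        = Complex.exp (-(Complex.I * φ)) * Complex.exp (((-a:ℤ):ℂ) * Complex.I * φ) := by
      intro φ; rw [← Complex.exp_add]; push_cast; ring_nf
    rw [eg, et, e1, e2, e1, e2]
    set x1 := Complex.exp (Complex.I * φ1)
    set x2 := Complex.exp (Complex.I * φ2)
    set y1 := Complex.exp (-(Complex.I * φ1))
    set y2 := Complex.exp (-(Complex.I * φ2))
    set g1 := Complex.exp ((γ:ℂ) * x1)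
    set g2 := Complex.exp ((γ:ℂ) * x2)
    set t1 := Complex.exp (((-a:ℤ):ℂ) * Complex.I * φ1)
    set t2 := Complex.exp (((-a:ℤ):ℂ) * Complex.I * φ2)
    linear_combination (g1*g2*t1*t2) * hx1 + (g1*g2*t1*t2) * hx2
  -- inner integral
  have hinner : ∀ φ1 : ℝ,
      (∫ φ2 in (0:ℝ)..(2 * Real.pi),
        ((‖Complex.exp (Complex.I * φ1) - Complex.exp (Complex.I * φ2)‖ ^ 2 : ℝ) : ℂ) *
          Complex.exp ((γ : ℂ) * (Complex.exp (Complex.I * φ1) + Complex.exp (Complex.I * φ2))) *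
          Complex.exp (-Complex.I * (a : ℂ) * ((φ1 : ℂ) + (φ2 : ℂ))))
      = 2 * E (-a) φ1 * (∫ φ in (0:ℝ)..(2*Real.pi), E (-a) φ)
        - E (1-a) φ1 * (∫ φ in (0:ℝ)..(2*Real.pi), E (-1-a) φ)
        - E (-1-a) φ1 * (∫ φ in (0:ℝ)..(2*Real.pi), E (1-a) φ) := by
    intro φ1
    rw [intervalIntegral.integral_congr (g := fun φ2 =>
      2 * E (-a) φ1 * E (-a) φ2 - E (1-a) φ1 * E (-1-a) φ2 - E (-1-a) φ1 * E (1-a) φ2)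
      (fun φ2 _ => hpt φ1 φ2)]
    rw [intervalIntegral.integral_sub (((hIE (-a)).const_mul _).sub ((hIE (-1-a)).const_mul _))
      ((hIE (1-a)).const_mul _),
      intervalIntegral.integral_sub ((hIE (-a)).const_mul _) ((hIE (-1-a)).const_mul _),
      intervalIntegral.integral_const_mul, intervalIntegral.integral_const_mul,
      intervalIntegral.integral_const_mul]
  rw [intervalIntegral.integral_congr (g := fun φ1 =>
      2 * E (-a) φ1 * (∫ φ in (0:ℝ)..(2*Real.pi), E (-a) φ)
        - E (1-a) φ1 * (∫ φ in (0:ℝ)..(2*Real.pi), E (-1-a) φ)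
        - E (-1-a) φ1 * (∫ φ in (0:ℝ)..(2*Real.pi), E (1-a) φ)) (fun φ1 _ => hinner φ1)]
  rw [intervalIntegral.integral_sub ((((hIE (-a)).const_mul _).mul_const _).sub
      (((hIE (1-a))).mul_const _)) ((hIE (-1-a)).mul_const _),
    intervalIntegral.integral_sub (((hIE (-a)).const_mul _).mul_const _) ((hIE (1-a)).mul_const _),
    intervalIntegral.integral_mul_const, intervalIntegral.integral_mul_const,
    intervalIntegral.integral_mul_const, intervalIntegral.integral_const_mul]
  have hJ : ∀ m : ℤ, (∫ φ in (0:ℝ)..(2*Real.pi), E m φ)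
      = if 0 ≤ -m then ((2*Real.pi*γ^(-m).toNat/(Nat.factorial (-m).toNat) : ℝ):ℂ) else 0 :=
    fun m => J_eq γ hγ m
  rw [hJ, hJ, hJ]
  have hπ : (Real.pi : ℝ) ≠ 0 := Real.pi_ne_zero
  cases a with
  | zero =>
    have hπC : (Real.pi : ℂ) ≠ 0 := Complex.ofReal_ne_zero.mpr hπ
    norm_num
    field_simp
  | succ b =>
    have hπC : (Real.pi : ℂ) ≠ 0 := Complex.ofReal_ne_zero.mpr hπ
    rw [if_pos (by omega), if_pos (by omega), if_pos (by omega)]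
    rw [show (- -(((b+1:ℕ)):ℤ)).toNat = b + 1 from by omega,
      show (-(1 - (((b+1:ℕ)):ℤ))).toNat = b from by omega,
      show (-(-1 - (((b+1:ℕ)):ℤ))).toNat = b + 2 from by omega]
    push_cast [Nat.factorial_succ]
    have hfbC : ((Nat.factorial b : ℂ)) ≠ 0 := Nat.cast_ne_zero.mpr (Nat.factorial_ne_zero b)
    have hb1 : ((b:ℂ) + 1) ≠ 0 := by
      intro h
      have h2 : ((b+1 : ℕ) : ℂ) ≠ 0 := Nat.cast_ne_zero.mpr (by omega)
      apply h2
      push_cast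
      linear_combination h
    have hb2 : ((b:ℂ) + 1 + 1) ≠ 0 := by
      intro h
      have h2 : ((b+2 : ℕ) : ℂ) ≠ 0 := Nat.cast_ne_zero.mpr (by omega)
      apply h2
      push_cast
      linear_combination h
    have hπC : (Real.pi : ℂ) ≠ 0 := Complex.ofReal_ne_zero.mpr hπ
    exact selberg_arith b γ Real.pi (Nat.factorial b) hfbC hπC hb1 hb2
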